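/- For a linear system with transfer function H(s) = C (sE - A)^{-1} B, the Loewner matrix with entries L_{ji} = (v_j r_i - ℓ_j w_i)/(μ_j - λ_i), where v_j^T = ℓ_j^T H(μ_j) and w_i = H(λ_i) r_i, factors as L = -O E R, where O is the generalized observability matrix with rows C(μ_j E - A)^{-1} and R is the generalized controllability matrix with columns (λ_i E - A)^{-1} B. -/

import Mathlib

open Matrix

/-- The Loewner matrix `L` with entries `(v_j ⬝ r_i - ℓ_j ⬝ w_i)/(μ_j - λ_i)`,
where `v_j^T = ℓ_j^T H(μ_j)` and `w_i = H(λ_i) r_i` for `H(s) = C (sE - A)⁻¹ B`,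
factors as `L = -O E R`. -/
theorem loewner_factorization
    {n m p q k : ℕ}
    (E A : Matrix (Fin n) (Fin n) ℂ)
    (B : Matrix (Fin n) (Fin m) ℂ)
    (C : Matrix (Fin p) (Fin n) ℂ)
    (μ : Fin q → ℂ) (lam : Fin k → ℂ)
    (ell : Fin q → Fin p → ℂ) (r : Fin k → Fin m → ℂ)
    (hμ : ∀ j, IsUnit (μ j • E - A))
    (hlam : ∀ i, IsUnit (lam i • E - A))
    (hμinj : Function.Injective μ) (hlaminj : Function.Injective lam)
    (hdist : ∀ j i, μ j ≠ lam i)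
    (O : Matrix (Fin q) (Fin n) ℂ)
    (R : Matrix (Fin n) (Fin k) ℂ)
    (hO : ∀ j x, O j x = (ell j ᵥ* (C * (μ j • E - A)⁻¹)) x)
    (hR : ∀ i x, R x i = (((lam i • E - A)⁻¹ * B) *ᵥ r i) x) :
    (Matrix.of fun j i =>
      ((ell j ᵥ* (C * (μ j • E - A)⁻¹ * B)) ⬝ᵥ r i
        - ell j ⬝ᵥ ((C * (lam i • E - A)⁻¹ * B) *ᵥ r i)) / (μ j - lam i))
      = -(O * E * R) := by

  ext j i
  have hμ' := (Matrix.isUnit_iff_isUnit_det _).mp (hμ j)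
  have hL' := (Matrix.isUnit_iff_isUnit_det _).mp (hlam i)
  have hne : μ j - lam i ≠ 0 := sub_ne_zero.mpr (hdist j i)
  set Mμ := μ j • E - A with hMμ
  set ML := lam i • E - A with hML
  have h2 : ML - Mμ = (lam i - μ j) • E := by
    ext a b
    simp [hMμ, hML, Matrix.sub_apply, Matrix.smul_apply, sub_smul, smul_eq_mul]
    ring
  have hinv : Mμ⁻¹ - ML⁻¹ = (lam i - μ j) • (Mμ⁻¹ * E * ML⁻¹) := by
    have h1 : Mμ⁻¹ * (ML - Mμ) * ML⁻¹ = Mμ⁻¹ - ML⁻¹ := by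
      rw [Matrix.mul_sub, Matrix.sub_mul, Matrix.mul_assoc Mμ⁻¹ ML ML⁻¹,
        Matrix.mul_nonsing_inv _ hL', Matrix.mul_one,
        Matrix.nonsing_inv_mul _ hμ', Matrix.one_mul]
    rw [← h1, h2, Matrix.mul_smul, Matrix.smul_mul]
  have hORE : (O * E * R) j i = (ell j ᵥ* (C * (Mμ⁻¹ * E * ML⁻¹) * B)) ⬝ᵥ r i := by
    rw [Matrix.mul_apply']
    have hOrow : (O * E) j = ell j ᵥ* (C * Mμ⁻¹ * E) := by
      funext x
      rw [Matrix.mul_apply']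
      have : O j = ell j ᵥ* (C * Mμ⁻¹) := funext (hO j)
      rw [this]
      simp only [← Matrix.vecMul_vecMul]
      rfl
    have hRcol : (fun x => R x i) = (ML⁻¹ * B) *ᵥ r i := funext (hR i)
    rw [hOrow, hRcol, Matrix.dotProduct_mulVec, Matrix.vecMul_vecMul]
    simp only [Matrix.mul_assoc]
  have hsmul : ∀ (c : ℂ) (X : Matrix (Fin p) (Fin m) ℂ),
      (ell j ᵥ* (c • X)) ⬝ᵥ r i = c * ((ell j ᵥ* X) ⬝ᵥ r i) := by
    intro c X
    simp only [Matrix.vecMul, dotProduct, Matrix.smul_apply, smul_eq_mul,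
      Finset.sum_mul, Finset.mul_sum]
    exact Finset.sum_congr rfl fun x _ => Finset.sum_congr rfl fun y _ => by ring
  have hnum : (ell j ᵥ* (C * Mμ⁻¹ * B)) ⬝ᵥ r i - ell j ⬝ᵥ ((C * ML⁻¹ * B) *ᵥ r i)
      = (lam i - μ j) * ((ell j ᵥ* (C * (Mμ⁻¹ * E * ML⁻¹) * B)) ⬝ᵥ r i) := by
    rw [Matrix.dotProduct_mulVec, ← sub_dotProduct, ← Matrix.vecMul_sub,
      ← Matrix.sub_mul, ← Matrix.mul_sub, hinv, Matrix.mul_smul, Matrix.smul_mul, hsmul]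
  simp only [Matrix.of_apply, Matrix.neg_apply, ← hMμ, ← hML, hORE, hnum]
  field_simp
  ring
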